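/- Let a, d, K, k be positive integers with a ≥ 2, gcd(a,d) = 1 and K ≤ (k−1)/2, and let r = a + K − ⌊(a+K)/k⌋·k. If 0 ≤ r ≤ K, then the Sylvester number of the sequence a, a+(K+1)d, …, a+kd equals (a² + 2(K−1)a + (a+2K−1)kd + K(K−k−2) + k − r(r−k−2)) / (2k). -/

import Mathlib

set_option linter.unusedSectionVars false

theorem parts_mem (a d K k : ℕ) (hKk : K + 1 ≤ k) :
    ∀ m s : ℕ, m * (K+1) ≤ s → s ≤ m * k →
      (m * a + s * d) ∈ AddSubmonoid.closure (insert a ((fun j => a + j * d) '' Set.Icc (K + 1) k)) := by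
  intro m
  induction m with
  | zero =>
    intro s h1 h2
    have hs : s = 0 := by omega
    simp only [hs, Nat.zero_mul, Nat.add_zero]
    exact zero_mem _
  | succ m ih =>
    intro s h1 h2
    have e1 : (m+1) * (K+1) = m * (K+1) + (K+1) := by ring
    have e2 : (m+1) * k = m * k + k := by ring
    set j := min k (s - m * (K+1)) with hj
    have hj1 : K + 1 ≤ j := by omega
    have hj2 : j ≤ k := min_le_left _ _
    have hjs : j ≤ s := by omega
    have hlo : m * (K+1) ≤ s - j := by omega
    have hhi : s - j ≤ m * k := by
      rcases le_or_gt k (s - m*(K+1)) with h | h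
      · have : j = k := by omega
        omega
      · have h3 : s - j = m * (K+1) := by omega
        calc s - j = m * (K+1) := h3
        _ ≤ m * k := Nat.mul_le_mul_left _ hKk
    have hgen : (a + j * d) ∈ AddSubmonoid.closure (insert a ((fun j => a + j * d) '' Set.Icc (K + 1) k)) := by
      apply AddSubmonoid.subset_closure
      right
      exact ⟨j, ⟨hj1, hj2⟩, rfl⟩
    have heq : (m+1) * a + s * d = (m * a + (s - j) * d) + (a + j * d) := by
      have h4 : (s - j) * d + j * d = s * d := by
        rw [← Nat.add_mul]; congr 1; omega
      have h5 : (m+1) * a = m * a + a := by ring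
      omega
    rw [heq]
    exact add_mem (ih _ hlo hhi) hgen


theorem mem_char (a d K k : ℕ) (hKk : K + 1 ≤ k) (n : ℕ) :
    n ∈ AddSubmonoid.closure (insert a ((fun j => a + j * d) '' Set.Icc (K + 1) k)) ↔
      ∃ p m s : ℕ, m * (K+1) ≤ s ∧ s ≤ m * k ∧ m ≤ p ∧ n = p * a + s * d := by
  constructor
  · intro hn
    induction hn using AddSubmonoid.closure_induction with
    | mem x hx =>
      rcases hx with rfl | ⟨j, hj, rfl⟩
      · exact ⟨1, 0, 0, by simp, by simp, by simp, by ring⟩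
      · exact ⟨1, 1, j, by simpa using hj.1, by simpa using hj.2, le_refl _, by ring⟩
    | zero => exact ⟨0, 0, 0, by simp, by simp, by simp, by simp⟩
    | add x y hx hy ihx ihy =>
      obtain ⟨p1, m1, s1, h1, h2, h3, rfl⟩ := ihx
      obtain ⟨p2, m2, s2, h4, h5, h6, rfl⟩ := ihy
      exact ⟨p1+p2, m1+m2, s1+s2, by nlinarith, by nlinarith, by omega, by ring⟩
  · rintro ⟨p, m, s, h1, h2, h3, rfl⟩
    have hma : m * a + s * d ∈ _ := parts_mem a d K k hKk m s h1 h2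
    have : p * a + s * d = (p - m) * a + (m * a + s * d) := by
      have : (p - m) * a + m * a = p * a := by rw [← Nat.add_mul]; congr 1; omega
      omega
    rw [this]
    refine add_mem ?_ hma
    have ha : a ∈ AddSubmonoid.closure (insert a ((fun j => a + j * d) '' Set.Icc (K + 1) k)) :=
      AddSubmonoid.subset_closure (Or.inl rfl)
    simpa [nsmul_eq_mul] using nsmul_mem ha (p - m)


lemma clF1 {k : ℕ} (hk : 0 < k) (s : ℕ) : s ≤ ((s + k - 1) / k) * k := by
  by_contra h
  push_neg at h
  have h2 : ((s + k - 1) / k + 1) * k ≤ s + k - 1 := by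
    have e : ((s + k - 1) / k + 1) * k = ((s + k - 1) / k) * k + k := by ring
    omega
  have := (Nat.le_div_iff_mul_le hk).mpr h2
  omega

lemma clF2 {k : ℕ} (hk : 0 < k) {s m : ℕ} (h : s ≤ m * k) : (s + k - 1) / k ≤ m := by
  by_contra hc
  push_neg at hc
  have h2 : (m + 1) * k ≤ s + k - 1 := (Nat.le_div_iff_mul_le hk).mp hc
  have e : (m + 1) * k = m * k + k := by ring
  omega

lemma clF3 {k : ℕ} {s s' : ℕ} (h : s ≤ s') : (s + k - 1) / k ≤ (s' + k - 1) / k :=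
  Nat.div_le_div_right (by omega)

lemma clF4 {k K s : ℕ} (hk2 : 2 * K + 1 ≤ k) (hs : K + 1 ≤ s) :
    ((s + k - 1) / k) * (K + 1) ≤ s := by
  have hk : 0 < k := by omega
  have h2 := Nat.div_add_mod (s + k - 1) k
  have h3 := Nat.mod_lt (s + k - 1) hk
  have hq1 : 1 ≤ (s + k - 1) / k := by
    rw [Nat.le_div_iff_mul_le hk]
    omega
  generalize hG : (s + k - 1) / k = q at h2 hq1 ⊢
  rcases Nat.lt_or_ge q 2 with h | h
  · have hq' : q = 1 := by omega
    simpa [hq'] using hs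
  · obtain ⟨q', rfl⟩ : ∃ q', q = q' + 2 := ⟨q - 2, by omega⟩
    have e1 : (q' + 2) * (K + 1) = K * q' + q' + 2 * K + 2 := by ring
    have e2 : k * (q' + 2) = k * q' + 2 * k := by ring
    have hm : (2 * K + 1) * q' ≤ k * q' := Nat.mul_le_mul_right _ hk2
    have e3 : (2 * K + 1) * q' = 2 * (K * q') + q' := by ring
    omega

lemma cl_succ {k : ℕ} (hk : 0 < k) {s : ℕ} (hs : 1 ≤ s) :
    (s + k - 1) / k = (s - 1) / k + 1 := by
  have e : s + k - 1 = (s - 1) + k := by omega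
  rw [e, Nat.add_div_right _ hk]

def sdiv (k N : ℕ) : ℕ := ∑ u ∈ Finset.range N, u / k

lemma sdiv_formula (k : ℕ) (hk : 0 < k) (N : ℕ) :
    2 * sdiv k N + k * (N / k) = k * (N / k * (N / k)) + 2 * (N % k * (N / k)) := by
  induction N with
  | zero => simp [sdiv]
  | succ N ih =>
    have hsum : sdiv k (N + 1) = sdiv k N + N / k := Finset.sum_range_succ _ _
    have hd := Nat.div_add_mod N k
    have hd1 := Nat.div_add_mod (N + 1) k
    have hm := Nat.mod_lt N hk
    have hm1 := Nat.mod_lt (N + 1) hk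
    have hsd := Nat.succ_div (a := N) (b := k)
    by_cases hdvd : k ∣ N + 1
    · rw [if_pos hdvd] at hsd
      have hρ' : (N + 1) % k = 0 := Nat.mod_eq_zero_of_dvd hdvd
      have hρk : N % k + 1 = k := by
        have e : k * (N / k + 1) = k * (N / k) + k := by ring
        rw [hsd] at hd1
        omega
      rw [hsum, hsd, hρ']
      have e2 : k * ((N / k + 1) * (N / k + 1)) = k * (N / k * (N / k)) + 2 * (k * (N / k)) + k := by
        ring
      have e3 : (N % k + 1) * (N / k) = N % k * (N / k) + N / k := by ring
      have e4 : k * (N / k) = (N % k + 1) * (N / k) := by rw [hρk]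
      have e5 : k * (N / k + 1) = k * (N / k) + k := by ring
      omega
    · rw [if_neg hdvd] at hsd
      simp only [Nat.add_zero] at hsd
      have hρ' : (N + 1) % k = N % k + 1 := by
        have e : k * ((N + 1) / k) = k * (N / k) := by rw [hsd]
        omega
      rw [hsum, hsd, hρ']
      have e1 : (N % k + 1) * (N / k) = N % k * (N / k) + N / k := by ring
      omega


def sfun (a K t : ℕ) : ℕ := if t ≤ K then t + a else t
def wfun (a d K k t : ℕ) : ℕ := ((sfun a K t + k - 1) / k) * a + (sfun a K t) * d

section
variable {a d K k : ℕ} (ha : 2 ≤ a) (hd : 0 < d) (hk2 : 2 * K + 1 ≤ k) (hKa : K + 1 ≤ a)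

include hKa in
lemma sfun_ge (t : ℕ) (ht : 1 ≤ t) : K + 1 ≤ sfun a K t := by
  unfold sfun; split <;> omega

lemma sfun_mod (t : ℕ) : sfun a K t % a = t % a := by
  unfold sfun; split
  · exact Nat.add_mod_right t a
  · rfl

include hk2 hKa in
lemma wfun_mem (t : ℕ) (ht : 1 ≤ t) :
    wfun a d K k t ∈ AddSubmonoid.closure (insert a ((fun j => a + j * d) '' Set.Icc (K + 1) k)) := by
  have hk : 0 < k := by omega
  rw [mem_char a d K k (by omega)]
  exact ⟨_, _, sfun a K t, clF4 hk2 (sfun_ge hKa t ht), clF1 hk _, le_refl _, rfl⟩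

lemma wfun_modeq (t : ℕ) : wfun a d K k t ≡ t * d [MOD a] := by
  unfold wfun
  calc ((sfun a K t + k - 1) / k) * a + (sfun a K t) * d
      ≡ 0 + (sfun a K t) * d [MOD a] := by
        exact Nat.ModEq.add_right _ (Nat.modEq_zero_iff_dvd.mpr ⟨_, Nat.mul_comm _ _⟩)
    _ ≡ t * d [MOD a] := by
        rw [Nat.zero_add]
        exact Nat.ModEq.mul_right d (by unfold Nat.ModEq; rw [sfun_mod])

include hk2 in
lemma wfun_min {n t : ℕ} (hgcd : Nat.gcd a d = 1) (ht1 : 1 ≤ t) (ht2 : t < a)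
    (hmem : n ∈ AddSubmonoid.closure (insert a ((fun j => a + j * d) '' Set.Icc (K + 1) k)))
    (hcong : n ≡ t * d [MOD a]) : wfun a d K k t ≤ n := by
  have hk : 0 < k := by omega
  rw [mem_char a d K k (by omega)] at hmem
  obtain ⟨p, m, s, h1, h2, h3, rfl⟩ := hmem
  -- s ≡ t [MOD a]
  have hsd : s * d ≡ t * d [MOD a] := by
    have h0 : (p * a + s * d) % a = (s * d) % a := by
      rw [Nat.add_comm, Nat.add_mul_mod_self_right]
    unfold Nat.ModEq at hcong ⊢
    omega
  have hst : s ≡ t [MOD a] := by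
    have hco : Nat.Coprime d a := (Nat.coprime_comm.mp hgcd)
    exact Nat.ModEq.cancel_right_of_coprime (by rwa [Nat.Coprime, Nat.gcd_comm] at hco) hsd
  have hsmod : s % a = t := by
    have h := hst
    unfold Nat.ModEq at h
    rwa [Nat.mod_eq_of_lt ht2] at h
  rcases Nat.eq_zero_or_pos s with rfl | hs
  · exfalso; simp at hsmod; omega
  · have hm1 : 1 ≤ m := by
      rcases Nat.eq_zero_or_pos m with rfl | h; · simp at h2; omega
      · exact h
    have hsK : K + 1 ≤ s := by
      have := h1; nlinarith
    have hss : sfun a K t ≤ s := by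
      have hts : t ≤ s := by
        conv_lhs => rw [← hsmod]
        exact Nat.mod_le s a
      unfold sfun
      split
      · -- t ≤ K : s ≥ t + a
        rename_i hcase
        have hne : s ≠ t := by omega
        have hdvd : a ∣ s - t := by
          have h6 := Nat.sub_mod_eq_zero_of_mod_eq (by rw [hsmod, Nat.mod_eq_of_lt ht2] : s % a = t % a)
          exact Nat.dvd_of_mod_eq_zero h6
        obtain ⟨u, hu⟩ := hdvd
        have hu1 : 1 ≤ u := by
          rcases Nat.eq_zero_or_pos u with rfl | h
          · exfalso; simp at hu; omega
          · exact h
        have : a * 1 ≤ a * u := Nat.mul_le_mul_left _ hu1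
        omega
      · omega
    unfold wfun
    have c1 : (sfun a K t + k - 1) / k ≤ (s + k - 1) / k := clF3 hss
    have c2 : (s + k - 1) / k ≤ m := clF2 hk h2
    have : ((sfun a K t + k - 1) / k) * a ≤ p * a := Nat.mul_le_mul_right _ (by omega)
    have : (sfun a K t) * d ≤ s * d := Nat.mul_le_mul_right _ hss
    omega

include hk2 hKa in
lemma wfun_up {n t : ℕ} (ht1 : 1 ≤ t)
    (hcong : n ≡ t * d [MOD a]) (hge : wfun a d K k t ≤ n) :
    n ∈ AddSubmonoid.closure (insert a ((fun j => a + j * d) '' Set.Icc (K + 1) k)) := by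
  have hw := wfun_modeq (a := a) (d := d) (K := K) (k := k) t
  have hmod : n % a = wfun a d K k t % a := by
    unfold Nat.ModEq at hcong hw; omega
  have hdvd : a ∣ n - wfun a d K k t :=
    Nat.dvd_of_mod_eq_zero (Nat.sub_mod_eq_zero_of_mod_eq hmod)
  obtain ⟨u, hu⟩ := hdvd
  have hcm : a * u = u * a := Nat.mul_comm a u
  have : n = wfun a d K k t + u * a := by omega
  rw [this]
  refine add_mem (wfun_mem hk2 hKa t ht1) ?_
  have haS : a ∈ AddSubmonoid.closure (insert a ((fun j => a + j * d) '' Set.Icc (K + 1) k)) :=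
    AddSubmonoid.subset_closure (Or.inl rfl)
  simpa [nsmul_eq_mul] using nsmul_mem haS u

end





section
variable {a d K k : ℕ} (ha : 2 ≤ a) (hd : 0 < d) (hk2 : 2 * K + 1 ≤ k) (hKa : K + 1 ≤ a)
  (hgcd : Nat.gcd a d = 1)

def gapF (a d K k : ℕ) : Finset ℕ :=
  (Finset.Icc 1 (a - 1)).biUnion
    (fun t => (Finset.range (wfun a d K k t / a)).image (fun i => t * d % a + i * a))

include ha hd hk2 hKa hgcd in
lemma gap_set_eq :
    {n : ℕ | 0 < n ∧
        n ∉ AddSubmonoid.closure (insert a ((fun j => a + j * d) '' Set.Icc (K + 1) k))}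
      = ↑(gapF a d K k) := by
  have ha0 : 0 < a := by omega
  ext n
  simp only [Set.mem_setOf_eq, Finset.coe_biUnion, Set.mem_iUnion, Finset.mem_coe,
    Finset.mem_biUnion, gapF, Finset.mem_image, Finset.mem_range, Finset.mem_Icc]
  constructor
  · rintro ⟨hn0, hnmem⟩
    -- find t
    obtain ⟨e, -, he⟩ := Nat.exists_mul_mod_eq_one_of_coprime
      (Nat.coprime_comm.mp hgcd) (by omega)
    set t := n * e % a with htdef
    have hta : t < a := Nat.mod_lt _ ha0
    have hcong : n ≡ t * d [MOD a] := by
      -- t * d ≡ n * e * d ≡ n * (d * e) ≡ n [MOD a]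
      have h1 : t * d ≡ n * e * d [MOD a] := Nat.ModEq.mul_right d (Nat.mod_modEq (n * e) a)
      have h2 : n * e * d = n * (d * e) := by ring
      have h3 : n * (d * e) ≡ n * 1 [MOD a] := Nat.ModEq.mul_left n
        (by unfold Nat.ModEq; rw [he, Nat.mod_eq_of_lt (by omega)])
      calc n = n * 1 := by ring
        _ ≡ n * (d * e) [MOD a] := h3.symm
        _ = n * e * d := h2.symm
        _ ≡ t * d [MOD a] := h1.symm
    have ht1 : 1 ≤ t := by
      rcases Nat.eq_zero_or_pos t with h0 | h
      · exfalso
        rw [h0] at hcong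
        simp only [Nat.zero_mul] at hcong
        have : a ∣ n := (Nat.modEq_zero_iff_dvd).mp hcong
        obtain ⟨u, rfl⟩ := this
        have hu : 1 ≤ u := by
          rcases Nat.eq_zero_or_pos u with rfl | h
          · simp at hn0
          · exact h
        apply hnmem
        have haS : a ∈ AddSubmonoid.closure (insert a ((fun j => a + j * d) '' Set.Icc (K + 1) k)) :=
          AddSubmonoid.subset_closure (Or.inl rfl)
        simpa [nsmul_eq_mul, Nat.mul_comm] using nsmul_mem haS u
      · exact h
    have hlt : n < wfun a d K k t := by
      by_contra hge
      push_neg at hge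
      exact hnmem (wfun_up hk2 hKa ht1 hcong hge)
    refine ⟨t, ⟨ht1, by omega⟩, n / a, ?_, ?_⟩
    · -- n / a < wfun t / a
      have hwmod : wfun a d K k t % a = t * d % a := wfun_modeq t
      have hnmod : n % a = t * d % a := hcong
      by_contra hge
      push_neg at hge
      have h7 : (wfun a d K k t / a) * a ≤ (n / a) * a := Nat.mul_le_mul_right _ hge
      have h8 := Nat.div_add_mod n a
      have h9 := Nat.div_add_mod (wfun a d K k t) a
      have e1 : a * (n / a) = (n / a) * a := Nat.mul_comm _ _
      have e2 : a * (wfun a d K k t / a) = (wfun a d K k t / a) * a := Nat.mul_comm _ _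
      omega
    · -- t*d % a + (n/a) * a = n
      have hnmod : n % a = t * d % a := hcong
      have h8 := Nat.div_add_mod n a
      have e1 : a * (n / a) = (n / a) * a := Nat.mul_comm _ _
      omega
  · rintro ⟨t, ⟨ht1, hta⟩, i, hi, rfl⟩
    have htlt : t < a := by omega
    have hc0 : 0 < t * d % a := by
      rcases Nat.eq_zero_or_pos (t * d % a) with h0 | h
      · exfalso
        have hdvd : a ∣ t * d := Nat.dvd_of_mod_eq_zero h0
        have : a ∣ t := (Nat.Coprime.dvd_of_dvd_mul_right hgcd) hdvd
        have := Nat.le_of_dvd (by omega) this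
        omega
      · exact h
    have hcong : (t * d % a + i * a) ≡ t * d [MOD a] := by
      unfold Nat.ModEq
      rw [Nat.add_mul_mod_self_right, Nat.mod_mod_of_dvd _ (dvd_refl a)]
    refine ⟨by omega, fun hmem => ?_⟩
    have hge := wfun_min hk2 hgcd ht1 htlt hmem hcong
    -- but t*d%a + i*a < wfun t
    have hwmod : wfun a d K k t % a = t * d % a := wfun_modeq t
    have h9 := Nat.div_add_mod (wfun a d K k t) a
    have h7 : (i+1) * a ≤ (wfun a d K k t / a) * a := Nat.mul_le_mul_right _ (by omega)
    have e1 : a * (wfun a d K k t / a) = (wfun a d K k t / a) * a := Nat.mul_comm _ _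
    have e2 : (i+1) * a = i * a + a := by ring
    omega

include ha hgcd in
lemma gap_card : (gapF a d K k).card = ∑ t ∈ Finset.Icc 1 (a - 1), wfun a d K k t / a := by
  have ha0 : 0 < a := by omega
  rw [gapF, Finset.card_biUnion]
  · apply Finset.sum_congr rfl
    intro t _
    rw [Finset.card_image_of_injective _ ?_, Finset.card_range]
    intro i j hij
    dsimp only at hij
    have : i * a = j * a := by omega
    exact Nat.eq_of_mul_eq_mul_right ha0 this
  · intro t1 h1 t2 h2 hne
    simp only [Finset.coe_Icc, Set.mem_Icc] at h1 h2
    rw [Function.onFun, Finset.disjoint_left]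
    rintro x hx1 hx2
    simp only [Finset.mem_image, Finset.mem_range] at hx1 hx2
    obtain ⟨i, hi, rfl⟩ := hx1
    obtain ⟨j, hj, hx⟩ := hx2
    have e1 : (t1 * d % a + i * a) % a = t1 * d % a := by
      rw [Nat.add_mul_mod_self_right, Nat.mod_mod_of_dvd _ (dvd_refl a)]
    have e2 : (t2 * d % a + j * a) % a = t2 * d % a := by
      rw [Nat.add_mul_mod_self_right, Nat.mod_mod_of_dvd _ (dvd_refl a)]
    rw [← hx, e2] at e1
    have hmeq : t2 * d ≡ t1 * d [MOD a] := e1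
    have := Nat.ModEq.cancel_right_of_coprime hgcd hmeq
    have h5 : t2 % a = t1 % a := this
    rw [Nat.mod_eq_of_lt (by omega), Nat.mod_eq_of_lt (by omega)] at h5
    exact hne (h5.symm ▸ rfl)






section
variable {a d K k : ℕ}

lemma gauss (ha : 1 ≤ a) (hgcd : Nat.gcd a d = 1) :
    2 * (∑ t ∈ Finset.range a, t * d / a) = (a - 1) * (d - 1) := by
  have ha0 : 0 < a := ha
  rcases Nat.eq_zero_or_pos d with rfl | hd
  · simp
  have hinj : ∀ x ∈ Finset.range a, ∀ y ∈ Finset.range a, x * d % a = y * d % a → x = y := by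
    intro x hx y hy hxy
    simp only [Finset.mem_range] at hx hy
    have h := Nat.ModEq.cancel_right_of_coprime hgcd (hxy : x * d ≡ y * d [MOD a])
    have h5 : x % a = y % a := h
    rwa [Nat.mod_eq_of_lt hx, Nat.mod_eq_of_lt hy] at h5
  have himg : Finset.image (fun t => t * d % a) (Finset.range a) = Finset.range a := by
    apply Finset.eq_of_subset_of_card_le
    · intro x hx
      simp only [Finset.mem_image, Finset.mem_range] at hx ⊢
      obtain ⟨t, _, rfl⟩ := hx
      exact Nat.mod_lt _ ha0
    · rw [Finset.card_image_of_injOn (fun x hx y hy => hinj x (by simpa using hx) y (by simpa using hy))]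
  have hrem : ∑ t ∈ Finset.range a, (t * d % a) = ∑ t ∈ Finset.range a, t := by
    conv_rhs => rw [← himg]
    rw [Finset.sum_image hinj]
  have h1 : (∑ t ∈ Finset.range a, t) * d
      = a * (∑ t ∈ Finset.range a, t * d / a) + ∑ t ∈ Finset.range a, t := by
    have hpt : ∑ t ∈ Finset.range a, t * d
        = ∑ t ∈ Finset.range a, (a * (t * d / a) + t * d % a) := by
      apply Finset.sum_congr rfl
      intro t _
      rw [Nat.div_add_mod]
    rw [Finset.sum_mul, hpt, Finset.sum_add_distrib, ← Finset.mul_sum, hrem]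
  have h2 : (∑ t ∈ Finset.range a, t) * 2 = a * (a - 1) := Finset.sum_range_id_mul_two a
  generalize hGg : (∑ t ∈ Finset.range a, t * d / a) = G at h1 ⊢
  generalize hSg : (∑ t ∈ Finset.range a, t) = S at h1 h2
  have key : a * ((a - 1) * d) = a * (2 * G + (a - 1)) := by
    calc a * ((a - 1) * d) = (a * (a - 1)) * d := by ring
      _ = (S * 2) * d := by rw [← h2]
      _ = (S * d) * 2 := by ring
      _ = (a * G + S) * 2 := by rw [h1]
      _ = a * (2 * G) + S * 2 := by ring
      _ = a * (2 * G) + a * (a - 1) := by rw [h2]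
      _ = a * (2 * G + (a - 1)) := by ring
  have h3 : (a - 1) * d = 2 * G + (a - 1) := Nat.eq_of_mul_eq_mul_left ha0 key
  obtain ⟨d', rfl⟩ : ∃ d', d = d' + 1 := ⟨d - 1, by omega⟩
  have e : (a - 1) * (d' + 1) = (a - 1) * d' + (a - 1) := by ring
  simp only [Nat.add_sub_cancel]
  omega

lemma sumB (ha0 : 0 < a) (hKa : K + 1 ≤ a) :
    ∑ t ∈ Finset.Ico 1 a, (sfun a K t * d) / a
      = (∑ t ∈ Finset.range a, t * d / a) + K * d := by
  rw [← Finset.sum_Ico_consecutive (fun t => (sfun a K t * d) / a)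
        (show 1 ≤ K + 1 by omega) (show K + 1 ≤ a from hKa)]
  have hB1 : ∑ t ∈ Finset.Ico 1 (K+1), (sfun a K t * d) / a
      = ∑ t ∈ Finset.Ico 1 (K+1), (d + t * d / a) := by
    apply Finset.sum_congr rfl
    intro t ht
    simp only [Finset.mem_Ico] at ht
    have hs : sfun a K t = t + a := by unfold sfun; rw [if_pos (by omega)]
    rw [hs]
    have e : (t + a) * d = a * d + t * d := by ring
    rw [e, Nat.mul_add_div ha0]
  have hB2 : ∑ t ∈ Finset.Ico (K+1) a, (sfun a K t * d) / a
      = ∑ t ∈ Finset.Ico (K+1) a, t * d / a := by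
    apply Finset.sum_congr rfl
    intro t ht
    simp only [Finset.mem_Ico] at ht
    have hs : sfun a K t = t := by unfold sfun; rw [if_neg (by omega)]
    rw [hs]
  have hB1' : ∑ t ∈ Finset.Ico 1 (K+1), (d + t * d / a)
      = K * d + ∑ t ∈ Finset.Ico 1 (K+1), t * d / a := by
    rw [Finset.sum_add_distrib, Finset.sum_const, Nat.card_Ico, smul_eq_mul,
      Nat.add_sub_cancel]
  rw [hB1, hB1', hB2]
  have hr : ∑ t ∈ Finset.range a, t * d / a
      = ∑ t ∈ Finset.Ico 0 a, t * d / a := by rw [Finset.range_eq_Ico]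
  rw [hr, ← Finset.sum_Ico_consecutive (fun t => t * d / a)
        (show (0:ℕ) ≤ 1 by omega) (show 1 ≤ a by omega),
      ← Finset.sum_Ico_consecutive (fun t => t * d / a)
        (show 1 ≤ K + 1 by omega) (show K + 1 ≤ a from hKa)]
  have h0 : ∑ t ∈ Finset.Ico 0 1, t * d / a = 0 := by simp
  omega

lemma sumA (hk2 : 2 * K + 1 ≤ k) (hKa : K + 1 ≤ a) (ha : 2 ≤ a)
    (hQ1 : 1 ≤ (a + K) / k) (hrK : (a + K) % k ≤ K) :
    (∑ t ∈ Finset.Ico 1 a, (sfun a K t + k - 1) / k) + (a + K) / k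
      = a + sdiv k (a + K) := by
  have hk : 0 < k := by omega
  set Q := (a + K) / k with hQ
  set r := (a + K) % k with hr0
  have hdm : k * Q + r = a + K := Nat.div_add_mod (a + K) k
  have hrk : r < k := Nat.mod_lt _ hk
  -- (a-1)/k = Q - 1
  have haQ : (a - 1) / k = Q - 1 := by
    obtain ⟨Q', hQ'⟩ : ∃ Q', Q = Q' + 1 := ⟨Q - 1, by omega⟩
    have hdm' := hdm
    rw [hQ'] at hdm' ⊢
    simp only [Nat.add_sub_cancel]
    apply Nat.div_eq_of_lt_le
    · have e1 : Q' * k = k * Q' := Nat.mul_comm _ _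
      have e2 : k * (Q' + 1) = k * Q' + k := by ring
      omega
    · have e2 : k * (Q' + 1) = k * Q' + k := by ring
      have e3 : (Q' + 1) * k = k * Q' + k := by ring
      omega
  -- rewrite each ceil as pred-div + 1
  have hA1 : ∑ t ∈ Finset.Ico 1 a, (sfun a K t + k - 1) / k
      = ∑ t ∈ Finset.Ico 1 a, ((sfun a K t - 1) / k + 1) := by
    apply Finset.sum_congr rfl
    intro t ht
    simp only [Finset.mem_Ico] at ht
    have : 1 ≤ sfun a K t := by unfold sfun; split <;> omega
    exact cl_succ hk this
  rw [hA1, Finset.sum_add_distrib, Finset.sum_const, Nat.card_Ico, smul_eq_mul, Nat.mul_one]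
  -- split [1,a) at K+1
  rw [← Finset.sum_Ico_consecutive (fun t => (sfun a K t - 1) / k)
        (show 1 ≤ K + 1 by omega) (show K + 1 ≤ a from hKa)]
  have hX : ∑ t ∈ Finset.Ico 1 (K+1), (sfun a K t - 1) / k
      = ∑ u ∈ Finset.Ico a (a + K), u / k := by
    rw [Finset.sum_Ico_eq_sum_range, Finset.sum_Ico_eq_sum_range]
    simp only [Nat.add_sub_cancel_left, Nat.add_sub_cancel]
    apply Finset.sum_congr rfl
    intro i hi
    simp only [Finset.mem_range] at hi
    have hs : sfun a K (1 + i) = 1 + i + a := by unfold sfun; rw [if_pos (by omega)]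
    rw [hs]
    congr 1
    omega
  have hY : ∑ t ∈ Finset.Ico (K+1) a, (sfun a K t - 1) / k
      = ∑ u ∈ Finset.Ico K (a - 1), u / k := by
    rw [Finset.sum_Ico_eq_sum_range, Finset.sum_Ico_eq_sum_range]
    have e : a - 1 - K = a - (K + 1) := by omega
    rw [e]
    apply Finset.sum_congr rfl
    intro i hi
    simp only [Finset.mem_range] at hi
    have hs : sfun a K (K + 1 + i) = K + 1 + i := by unfold sfun; rw [if_neg (by omega)]
    rw [hs]
    congr 1
    omega
  -- decompose sdiv k (a+K)
  have hsd : sdiv k (a + K) = (∑ u ∈ Finset.Ico K (a-1), u / k) + (Q - 1)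
      + (∑ u ∈ Finset.Ico a (a + K), u / k) := by
    have h1 : sdiv k (a + K) = ∑ u ∈ Finset.Ico 0 (a + K), u / k := by
      rw [sdiv, Finset.range_eq_Ico]
    rw [h1,
      ← Finset.sum_Ico_consecutive (fun u => u / k) (show (0:ℕ) ≤ K by omega) (show K ≤ a + K by omega),
      ← Finset.sum_Ico_consecutive (fun u => u / k) (show K ≤ a - 1 by omega) (show a - 1 ≤ a + K by omega),
      ← Finset.sum_Ico_consecutive (fun u => u / k) (show a - 1 ≤ a by omega) (show a ≤ a + K by omega)]
    have hz : ∑ u ∈ Finset.Ico 0 K, u / k = 0 := by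
      apply Finset.sum_eq_zero
      intro u hu
      simp only [Finset.mem_Ico] at hu
      exact Nat.div_eq_of_lt (by omega)
    have hone : ∑ u ∈ Finset.Ico (a-1) a, u / k = Q - 1 := by
      have he : Finset.Ico (a-1) a = {a-1} := by
        ext x; simp [Finset.mem_Ico]; omega
      rw [he, Finset.sum_singleton, haQ]
    omega
  rw [hX, hY, hsd]
  omega

end


set_option maxHeartbeats 1000000 in
theorem stmt8 (a d K k r : ℕ) (ha : 2 ≤ a) (hd : 0 < d) (hK : 0 < K) (hk : 0 < k)
    (hgcd : Nat.gcd a d = 1) (hKk : 2 * K ≤ k - 1)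
    (hr : r = a + K - ((a + K) / k) * k) (hrK : r ≤ K) :
    ({n : ℕ | 0 < n ∧
        n ∉ AddSubmonoid.closure (insert a ((fun j => a + j * d) '' Set.Icc (K + 1) k))}.ncard : ℚ)
      = ((a : ℚ) ^ 2 + 2 * ((K : ℚ) - 1) * a + ((a : ℚ) + 2 * K - 1) * k * d
          + (K : ℚ) * ((K : ℚ) - k - 2) + k - (r : ℚ) * ((r : ℚ) - k - 2)) / (2 * k) := by
  have hk2 : 2 * K + 1 ≤ k := by omega
  have ha0 : 0 < a := by omega
  have hQ1 : 1 ≤ (a + K) / k := by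
    rcases Nat.eq_zero_or_pos ((a + K) / k) with h0 | h
    · rw [h0] at hr; simp at hr; omega
    · exact h
  have hdm := Nat.div_add_mod (a + K) k
  have hklea : k ≤ a + K := by
    have h6 : k * 1 ≤ k * ((a + K) / k) := Nat.mul_le_mul_left k hQ1
    have h7 : k * 1 = k := by ring
    omega
  have hKa : K + 1 ≤ a := by omega
  have hmodr : (a + K) % k = r := by
    have hcm : ((a + K) / k) * k = k * ((a + K) / k) := Nat.mul_comm _ _
    omega
  -- replace the set by the finset
  rw [gap_set_eq ha hd hk2 hKa hgcd, Set.ncard_coe_finset, gap_card ha hgcd]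
  -- convert index set and split the summand
  have hIcc : Finset.Icc 1 (a - 1) = Finset.Ico 1 a := by
    ext x; simp only [Finset.mem_Icc, Finset.mem_Ico]; omega
  have hpt : ∀ t, wfun a d K k t / a = (sfun a K t + k - 1) / k + (sfun a K t * d) / a := by
    intro t
    unfold wfun
    rw [Nat.mul_comm ((sfun a K t + k - 1) / k) a, Nat.mul_add_div ha0]
  have hsplit : ∑ t ∈ Finset.Icc 1 (a - 1), wfun a d K k t / a
      = (∑ t ∈ Finset.Ico 1 a, (sfun a K t + k - 1) / k)
        + ∑ t ∈ Finset.Ico 1 a, (sfun a K t * d) / a := by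
    rw [hIcc, ← Finset.sum_add_distrib]
    exact Finset.sum_congr rfl (fun t _ => hpt t)
  rw [hsplit]
  -- main natural-number identity
  have hA := sumA hk2 hKa ha hQ1 (by omega : (a + K) % k ≤ K)
  have hB := sumB ha0 hKa (d := d)
  have hmain : ((∑ t ∈ Finset.Ico 1 a, (sfun a K t + k - 1) / k)
        + ∑ t ∈ Finset.Ico 1 a, (sfun a K t * d) / a) + (a + K) / k
      = a + sdiv k (a + K) + (∑ t ∈ Finset.range a, t * d / a) + K * d := by
    omega
  have hE2ℕ := sdiv_formula k hk (a + K)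
  rw [hmodr] at hE2ℕ
  have hE3ℕ := gauss (show 1 ≤ a by omega) hgcd
  have h9 : k * ((a + K) / k) + r = a + K := by omega
  -- move to ℚ
  have hcQ := congrArg (fun n : ℕ => (n : ℚ)) hmain
  have hE2Q := congrArg (fun n : ℕ => (n : ℚ)) hE2ℕ
  have hE4Q := congrArg (fun n : ℕ => (n : ℚ)) h9
  push_cast at hcQ hE2Q hE4Q
  have hE3Q : 2 * (∑ x ∈ Finset.range a, ((x * d / a : ℕ) : ℚ)) = ((a:ℚ) - 1) * ((d:ℚ) - 1) := by
    rw [show ((a:ℚ) - 1) = ((a - 1 : ℕ) : ℚ) by rw [Nat.cast_sub (by omega)]; norm_num,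
        show ((d:ℚ) - 1) = ((d - 1 : ℕ) : ℚ) by rw [Nat.cast_sub (by omega)]; norm_num]
    exact_mod_cast hE3ℕ
  rw [eq_div_iff (show (2 * (k:ℚ)) ≠ 0 by positivity)]
  push_cast
  linear_combination (2 * (k:ℚ)) * hcQ + (k:ℚ) * hE2Q + (k:ℚ) * hE3Q
    + ((k:ℚ) * ((((a + K) / k : ℕ)) : ℚ) + (a:ℚ) + (K:ℚ) + (r:ℚ) - (k:ℚ) - 2) * hE4Q
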